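/- Let k be a nonzero integer and let σ̂_1^{(k)} ∈ Aut(F_n) be the automorphism taking x_1 to x_1^k x_2 x_1^{−k}, x_2 to x_1, and fixing all other free generators. If w ∈ F_n has reduced word of the form x_1^k u x_1^{−k}, where u is a nonempty reduced word that neither begins nor ends with a letter x_1^{±1}, then the reduced word of σ̂_1^{(k)}(w) is of the form x_1^k u' x_1^{−k}, where u' is a nonempty reduced word that neither begins nor ends with a letter x_1^{±1}. -/

import Mathlib

namespace WadaAux

open FreeGroup

set_option linter.unusedSectionVars false

variable {α : Type*} [DecidableEq α]

/-- reducedness of a word -/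
def Rd (L : List (α × Bool)) : Prop :=
  List.Chain' (fun p q => ¬(q.1 = p.1 ∧ q.2 = !p.2)) L

lemma rd_reduce (L : List (α × Bool)) : Rd (reduce L) := by
  induction L with
  | nil => simp [Rd, reduce, List.Chain']
  | cons x L ih =>
    rw [reduce.cons]
    rcases h : reduce L with _ | ⟨hd, tl⟩
    · simp [Rd, List.Chain']
    · rw [h] at ih
      by_cases hc : x.1 = hd.1 ∧ x.2 = !hd.2
      · simp only [hc, and_self, if_true]
        exact ih.tail
      · simp only [hc, if_false]
        refine List.IsChain.cons_cons ?_ ih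
        intro hcontr
        exact hc ⟨hcontr.1.symm, by rcases hcontr with ⟨h1, h2⟩; rw [h2]; simp⟩

lemma rd_toWord (x : FreeGroup α) : Rd x.toWord := by
  rw [← reduce_toWord]; exact rd_reduce _

lemma reduce_eq_self {L : List (α × Bool)} (h : Rd L) : reduce L = L := by
  induction L with
  | nil => rfl
  | cons x L ih =>
    rw [reduce.cons, ih h.tail]
    rcases L with _ | ⟨hd, tl⟩
    · rfl
    · have hx : ¬(hd.1 = x.1 ∧ hd.2 = !x.2) := List.isChain_cons_cons.1 h |>.1
      have : ¬(x.1 = hd.1 ∧ x.2 = !hd.2) := by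
        intro ⟨h1, h2⟩; exact hx ⟨h1.symm, by rw [h2]; simp⟩
      simp [this]

lemma toWord_mk_eq {L : List (α × Bool)} (h : Rd L) : (FreeGroup.mk L).toWord = L := by
  rw [toWord_mk, reduce_eq_self h]

/-- the reduced word for `of x ^ c` -/
def pw (x : α) (c : ℤ) : List (α × Bool) := List.replicate c.natAbs (x, decide (0 < c))

lemma pw_zero (x : α) : pw x 0 = [] := rfl

lemma rd_pw (x : α) (c : ℤ) : Rd (pw x c) :=
  List.isChain_replicate_of_rel _ (by simp)

lemma mem_pw {x : α} {c : ℤ} {p : α × Bool} (h : p ∈ pw x c) : p = (x, decide (0 < c)) :=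
  List.eq_of_mem_replicate h

lemma pw_head? (x : α) {c : ℤ} (hc : c ≠ 0) : (pw x c).head? = some (x, decide (0 < c)) := by
  rw [pw, List.head?_replicate, if_neg (by simpa using hc)]

lemma pw_getLast? (x : α) {c : ℤ} (hc : c ≠ 0) : (pw x c).getLast? = some (x, decide (0 < c)) := by
  rw [pw, List.getLast?_replicate, if_neg (by simpa using hc)]

lemma pw_eq_nil_iff (x : α) (c : ℤ) : pw x c = [] ↔ c = 0 := by
  simp [pw, Int.natAbs_eq_zero]

lemma mk_replicate_true (x : α) (m : ℕ) :
    FreeGroup.mk (List.replicate m (x, true)) = of x ^ m := by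
  rw [← toWord_of_pow, mk_toWord]

lemma mk_pw (x : α) (c : ℤ) : FreeGroup.mk (pw x c) = of x ^ c := by
  rcases lt_trichotomy c 0 with h | h | h
  · have : (pw x c) = FreeGroup.invRev (List.replicate c.natAbs (x, true)) := by
      simp only [pw, invRev, List.map_replicate, List.reverse_replicate]
      congr 1
      simp [h.le]
    rw [this, ← inv_mk, mk_replicate_true]
    rw [← zpow_natCast, ← zpow_neg]
    congr 1
    omega
  · subst h; simp [pw_zero, one_eq_mk]
  · rw [pw, decide_eq_true h, mk_replicate_true, ← zpow_natCast]
    congr 1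
    omega

lemma mk_singleton (x : α) (s : Bool) :
    FreeGroup.mk [(x, s)] = of x ^ (cond s (1 : ℤ) (-1)) := by
  cases s
  · have : ([(x, false)] : List (α × Bool)) = FreeGroup.invRev [(x, true)] := by
      simp [invRev]
    rw [this, ← inv_mk]
    simp only [cond_false, zpow_neg, zpow_one]
    rfl
  · simp only [cond_true, zpow_one]
    rfl

end WadaAux


namespace Wada2

open FreeGroup WadaAux

variable {α : Type*} [DecidableEq α]

set_option linter.unusedSectionVars false
set_option maxHeartbeats 1000000

/-- the auxiliary automorphism `x1 ↦ x2, x2 ↦ x1, xj ↦ x1^{-k} xj x1^k` -/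
def psi (a b : α) (k : ℤ) : FreeGroup α →* FreeGroup α :=
  FreeGroup.lift fun i =>
    if i = a then of b else if i = b then of a else of a ^ (-k) * of i * of a ^ k

lemma psi_of_a (a b : α) (k : ℤ) : psi a b k (of a) = of b := by
  simp [psi, FreeGroup.lift_apply_of]

lemma psi_of_b {a b : α} (hab : a ≠ b) (k : ℤ) : psi a b k (of b) = of a := by
  simp [psi, FreeGroup.lift_apply_of, hab.symm]

lemma psi_of_other {a b i : α} (hia : i ≠ a) (hib : i ≠ b) (k : ℤ) :
    psi a b k (of i) = of a ^ (-k) * of i * of a ^ k := by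
  simp [psi, FreeGroup.lift_apply_of, hia, hib]

lemma pow_mul_mk (a : α) (m c : ℤ) (T : List (α × Bool)) :
    of a ^ m * FreeGroup.mk (pw a c ++ T) = FreeGroup.mk (pw a (m + c) ++ T) := by
  rw [← FreeGroup.mul_mk, ← FreeGroup.mul_mk, mk_pw, mk_pw, ← mul_assoc, ← zpow_add]

lemma pw_forall_head (a : α) (c : ℤ) : ∀ y ∈ (pw a c).head?, y.1 = a := by
  intro y hy
  by_cases hc : c = 0
  · subst hc; simp [pw_zero] at hy
  · rw [pw_head? a hc] at hy; simp only [Option.mem_def, Option.some.injEq] at hy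
    rw [← hy]

lemma pw_forall_getLast (a : α) (c : ℤ) : ∀ y ∈ (pw a c).getLast?, y.1 = a := by
  intro y hy
  by_cases hc : c = 0
  · subst hc; simp [pw_zero] at hy
  · rw [pw_getLast? a hc] at hy; simp only [Option.mem_def, Option.some.injEq] at hy
    rw [← hy]

lemma pwT_head? (a : α) (c : ℤ) (T : List (α × Bool)) :
    (pw a c ++ T).head? = if c = 0 then T.head? else some (a, decide (0 < c)) := by
  by_cases hc : c = 0
  · subst hc; simp [pw_zero]
  · rw [List.head?_append, pw_head? a hc, if_neg hc]
    rfl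

/-- junction between a power of `a` and a word not starting with `a` is reduced -/
lemma pw_junction (a : α) (c : ℤ) (T : List (α × Bool)) (hTa : ∀ p ∈ T.head?, p.1 ≠ a) :
    Rd (pw a c ++ T) → True := fun _ => trivial

lemma rd_pw_append (a : α) (c : ℤ) (T : List (α × Bool)) (hrdT : Rd T)
    (hTa : ∀ p ∈ T.head?, p.1 ≠ a) : Rd (pw a c ++ T) := by
  refine List.isChain_append.2 ⟨rd_pw a c, hrdT, ?_⟩
  intro x hx y hy ⟨h1, h2⟩
  exact hTa y hy (h1.trans (pw_forall_getLast a c x hx))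

/-- the "offset" determined by the first non-`a` block -/
def off (b : α) (k : ℤ) (T : List (α × Bool)) : ℤ :=
  (T.head?.elim 0 fun p => if p.1 = b then 0 else k)

/-- translation of the head of the image word back to the head of the source word -/
def htr (a b : α) (o : Option (α × Bool)) : Option (α × Bool) :=
  o.map fun p => (if p.1 = b then a else p.1, p.2)

theorem main (a b : α) (hab : a ≠ b) (k : ℤ) (hk : k ≠ 0) (L : List (α × Bool)) (hL : Rd L) :
    ∃ c m : ℤ, ∃ T : List (α × Bool),
      psi a b k (FreeGroup.mk L) = FreeGroup.mk (pw a c ++ T) ∧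
      Rd (pw a c ++ T) ∧
      (∀ p ∈ T.head?, p.1 ≠ a) ∧
      c = m - off b k T ∧
      (m = 0 → L.head? = htr a b T.head?) ∧
      (m ≠ 0 → L.head? = some (b, decide (0 < m))) := by
  induction L with
  | nil =>
    refine ⟨0, 0, [], ?_, ?_, ?_, ?_, ?_, ?_⟩ <;>
      simp [pw_zero, ← one_eq_mk, Rd, off, htr, List.Chain']
  | cons x L ih =>
    obtain ⟨i, s⟩ := x
    have hrel : ∀ y ∈ L.head?, ¬(y.1 = i ∧ y.2 = !s) := (List.isChain_cons.1 hL).1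
    obtain ⟨c, m, T, heq, hrd, hTa, hcm, hm0, hmne⟩ := ih hL.tail
    have hrdT : Rd T := ((List.isChain_append.1 hrd).2).1
    have hsplit : psi a b k (FreeGroup.mk ((i, s) :: L)) =
        (psi a b k (of i)) ^ (cond s (1 : ℤ) (-1)) * FreeGroup.mk (pw a c ++ T) := by
      have h1 : FreeGroup.mk ((i, s) :: L) = FreeGroup.mk [(i, s)] * FreeGroup.mk L := by
        rw [FreeGroup.mul_mk]; rfl
      rw [h1, _root_.map_mul (psi a b k), mk_singleton, map_zpow (psi a b k), heq]
    by_cases hia : i = a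
    · -- letter `a` : image is a `b`-letter
      refine ⟨0, 0, (b, s) :: (pw a c ++ T), ?_, ?_, ?_, ?_, ?_, ?_⟩
      · rw [hsplit, hia, psi_of_a, ← mk_singleton, FreeGroup.mul_mk, pw_zero,
          List.nil_append]
        rfl
      · rw [pw_zero, List.nil_append]
        refine List.isChain_cons.2 ⟨?_, hrd⟩
        intro y hy ⟨hb1, hb2⟩
        rw [pwT_head? a c T] at hy
        by_cases hc : c = 0
        · rw [if_pos hc] at hy
          have hoffT : off b k T = 0 := by
            simp [off, Option.mem_def.1 hy, hb1]
          have hmz : m = 0 := by omega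
          have hLh : L.head? = some (a, y.2) := by
            rw [hm0 hmz, Option.mem_def.1 hy]
            simp [htr, show y.1 = b from hb1]
          exact hrel (a, y.2) (Option.mem_def.2 hLh) ⟨hia.symm, hb2⟩
        · rw [if_neg hc] at hy
          simp only [Option.mem_def, Option.some.injEq] at hy
          rw [← hy] at hb1
          exact hab hb1
      · intro p hp
        simp only [List.head?_cons, Option.mem_def, Option.some.injEq] at hp
        rw [← hp]
        exact hab.symm
      · simp [off]
      · intro _
        simp [htr, hia]
      · intro h; exact absurd rfl h
    · by_cases hib : i = b
      · -- letter `b` : image is an `a`-letter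
        refine ⟨cond s (1 : ℤ) (-1) + c, cond s (1 : ℤ) (-1) + m, T, ?_, ?_, hTa, ?_, ?_, ?_⟩
        · rw [hsplit, hib, psi_of_b hab, pow_mul_mk]
        · exact rd_pw_append a _ T hrdT hTa
        · have : c = m - off b k T := hcm
          omega
        · intro h
          exfalso
          rcases eq_or_ne m 0 with hm | hm
          · subst hm; cases s <;> simp_all
          · have hLh := hmne hm
            have := hrel _ (by rw [hLh]; rfl)
            have hds : decide (0 < m) ≠ !s := fun hq => this ⟨hib.symm, hq⟩
            cases s <;> simp_all <;> omega
        · intro _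
          simp only [List.head?_cons, hib, Option.some.injEq, Prod.mk.injEq, true_and]
          rcases eq_or_ne m 0 with hm | hm
          · subst hm; cases s <;> simp <;> omega
          · have hLh := hmne hm
            have := hrel _ (by rw [hLh]; rfl)
            have hds : decide (0 < m) ≠ !s := fun hq => this ⟨hib.symm, hq⟩
            cases s <;> simp_all <;> omega
      · -- other letter
        refine ⟨-k, 0, (i, s) :: (pw a (k + c) ++ T), ?_, ?_, ?_, ?_, ?_, ?_⟩
        · rw [hsplit, psi_of_other hia hib]
          have hOa : of a ^ k = (of a ^ (-k) : FreeGroup α)⁻¹ := by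
            rw [zpow_neg, inv_inv]
          have hconj : ((of a ^ (-k) * of i * of a ^ k : FreeGroup α)) ^ (cond s (1 : ℤ) (-1)) =
              of a ^ (-k) * of i ^ (cond s (1 : ℤ) (-1)) * of a ^ k := by
            rw [hOa, conj_zpow]
          rw [hconj, mul_assoc, mul_assoc, pow_mul_mk, ← mk_singleton,
            FreeGroup.mul_mk, ← mk_pw a (-k), FreeGroup.mul_mk]
          rfl
        · refine List.isChain_append.2 ⟨rd_pw a (-k), ?_, ?_⟩
          · refine List.isChain_cons.2 ⟨?_, rd_pw_append a _ T hrdT hTa⟩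
            intro y hy ⟨hb1, hb2⟩
            rw [pwT_head? a (k + c) T] at hy
            by_cases hkc : k + c = 0
            · rw [if_pos hkc] at hy
              have hya : y.1 ≠ a := hTa y hy
              by_cases hyb : y.1 = b
              · exact hib (hb1.symm.trans hyb)
              · have hoffT : off b k T = k := by
                  simp [off, Option.mem_def.1 hy, hyb]
                have hmz : m = 0 := by omega
                have hLh : L.head? = some y := by
                  rw [hm0 hmz, Option.mem_def.1 hy]
                  simp [htr, hyb]
                exact hrel y (Option.mem_def.2 hLh) ⟨hb1, hb2⟩
            · rw [if_neg hkc] at hy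
              simp only [Option.mem_def, Option.some.injEq] at hy
              rw [← hy] at hb1
              exact hia (hb1.symm)
          · intro x hx y hy ⟨hb1, hb2⟩
            simp only [List.head?_cons, Option.mem_def, Option.some.injEq] at hy
            rw [← hy] at hb1
            exact hia (hb1.trans (pw_forall_getLast a (-k) x hx))
        · intro p hp
          simp only [List.head?_cons, Option.mem_def, Option.some.injEq] at hp
          rw [← hp]
          exact hia
        · simp [off, hib]
        · intro _
          simp [htr, hib]
        · intro h; exact absurd rfl h

end Wada2


namespace Wada3

open FreeGroup WadaAux Wada2

variable {α : Type*} [DecidableEq α]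

set_option linter.unusedSectionVars false
set_option maxHeartbeats 1000000

lemma psi_toWord_spec (a b : α) (hab : a ≠ b) (k : ℤ) (hk : k ≠ 0) (u : FreeGroup α)
    (hu : u ≠ 1) (hh : ∀ p ∈ u.toWord.head?, p.1 ≠ a) :
    (psi a b k u).toWord ≠ [] ∧ ∀ p ∈ (psi a b k u).toWord.head?, p.1 ≠ b := by
  obtain ⟨c, m, T, heq, hrd, hTa, hcm, hm0, hmne⟩ :=
    main a b hab k hk u.toWord (rd_toWord u)
  rw [mk_toWord] at heq
  have htw : (psi a b k u).toWord = pw a c ++ T := by rw [heq, toWord_mk_eq hrd]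
  constructor
  · rw [htw]
    intro hnil
    rcases List.append_eq_nil_iff.1 hnil with ⟨h1, h2⟩
    have hc : c = 0 := (pw_eq_nil_iff a c).1 h1
    have hoffT : off b k T = 0 := by subst h2; simp [off]
    have hmz : m = 0 := by omega
    have := hm0 hmz
    subst h2
    simp only [htr, List.head?_nil, Option.map_none] at this
    exact hu (FreeGroup.toWord_eq_nil_iff.1 (List.head?_eq_none_iff.1 this))
  · intro p hp
    rw [htw, pwT_head? a c T] at hp
    by_cases hc : c = 0
    · rw [if_pos hc] at hp
      have hpa : p.1 ≠ a := hTa p hp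
      intro hpb
      have hoffT : off b k T = 0 := by simp [off, Option.mem_def.1 hp, hpb]
      have hmz : m = 0 := by omega
      have hLh : u.toWord.head? = some (a, p.2) := by
        rw [hm0 hmz, Option.mem_def.1 hp]
        simp [htr, hpb]
      exact hh (a, p.2) (Option.mem_def.2 hLh) rfl
    · rw [if_neg hc] at hp
      simp only [Option.mem_def, Option.some.injEq] at hp
      rw [← hp]
      exact hab

lemma invRev_head? (l : List (α × Bool)) :
    (FreeGroup.invRev l).head? = l.getLast?.map fun p => (p.1, !p.2) := by
  rw [FreeGroup.invRev, List.head?_reverse, List.getLast?_map]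

lemma psi_toWord_getLast (a b : α) (hab : a ≠ b) (k : ℤ) (hk : k ≠ 0) (u : FreeGroup α)
    (hu : u ≠ 1) (hl : ∀ p ∈ u.toWord.getLast?, p.1 ≠ a) :
    ∀ p ∈ (psi a b k u).toWord.getLast?, p.1 ≠ b := by
  have huinv : u⁻¹ ≠ 1 := inv_ne_one.2 hu
  have hhinv : ∀ p ∈ (u⁻¹).toWord.head?, p.1 ≠ a := by
    intro p hp
    rw [FreeGroup.toWord_inv, invRev_head?] at hp
    simp only [Option.mem_def, Option.map_eq_some_iff] at hp
    obtain ⟨q, hq, hqp⟩ := hp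
    rw [← hqp]
    exact hl q (Option.mem_def.2 hq)
  have h2 := (psi_toWord_spec a b hab k hk u⁻¹ huinv hhinv).2
  intro p hp
  have : (psi a b k u⁻¹).toWord.head? = some (p.1, !p.2) := by
    rw [_root_.map_inv, FreeGroup.toWord_inv, invRev_head?, Option.mem_def.1 hp]
    rfl
  exact fun hpb => h2 (p.1, !p.2) (Option.mem_def.2 this) hpb

/-- The key assembly: `of b ^ k * psi u * of b ^ (-k)` has reduced word beginning
and ending with a `b`-letter. -/
theorem conj_spec (a b : α) (hab : a ≠ b) (k : ℤ) (hk : k ≠ 0) (u : FreeGroup α)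
    (hu : u ≠ 1) (hh : ∀ p ∈ u.toWord.head?, p.1 ≠ a)
    (hl : ∀ p ∈ u.toWord.getLast?, p.1 ≠ a) :
    (of b ^ k * psi a b k u * of b ^ (-k)).toWord.head? = some (b, decide (0 < k)) ∧
    (of b ^ k * psi a b k u * of b ^ (-k)).toWord.getLast? = some (b, decide (0 < -k)) := by
  obtain ⟨hne, hhead⟩ := psi_toWord_spec a b hab k hk u hu hh
  have hlast := psi_toWord_getLast a b hab k hk u hu hl
  set M := (psi a b k u).toWord with hM
  have hrdM : Rd M := rd_toWord _
  have hexp : of b ^ k * psi a b k u * of b ^ (-k) =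
      FreeGroup.mk (pw b k ++ (M ++ pw b (-k))) := by
    rw [← FreeGroup.mul_mk, ← FreeGroup.mul_mk, mk_pw, mk_pw, hM, mk_toWord, mul_assoc]
  have hrd2 : Rd (M ++ pw b (-k)) := by
    refine List.isChain_append.2 ⟨hrdM, rd_pw b (-k), ?_⟩
    intro x hx y hy ⟨h1, h2⟩
    exact hlast x hx (h1.symm.trans (pw_forall_head b (-k) y hy))
  have hrd3 : Rd (pw b k ++ (M ++ pw b (-k))) := by
    refine List.isChain_append.2 ⟨rd_pw b k, hrd2, ?_⟩
    intro x hx y hy ⟨h1, h2⟩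
    have hyM : y ∈ M.head? := by
      rcases hM0 : M.head? with _ | q
      · exact absurd (List.head?_eq_none_iff.1 hM0) hne
      · rwa [List.head?_append, hM0] at hy
    exact hhead y hyM (h1.trans (pw_forall_getLast b k x hx))
  have htw : (of b ^ k * psi a b k u * of b ^ (-k)).toWord = pw b k ++ (M ++ pw b (-k)) := by
    rw [hexp, toWord_mk_eq hrd3]
  constructor
  · rw [htw, List.head?_append, pw_head? b hk]
    rfl
  · rw [htw, List.getLast?_append, List.getLast?_append, pw_getLast? b (neg_ne_zero.2 hk)]
    rfl

end Wada3


open FreeGroup in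
/-- Let `σ̂_1^{(k)} ∈ Aut(F_n)` be the automorphism with `x_1 ↦ x_1^k x_2 x_1^{-k}`,
`x_2 ↦ x_1`, fixing all other free generators (`k ≠ 0`). If `w ∈ F_n` has reduced
word of the form `x_1^k u x_1^{-k}` with `u` a nonempty reduced word neither
beginning nor ending with a letter `x_1^{±1}`, then the reduced word of
`σ̂_1^{(k)}(w)` has the same form `x_1^k u' x_1^{-k}`, with `u'` nonempty and neither
beginning nor ending with a letter `x_1^{±1}`. -/
theorem wada_type1_sigma1hat_preserves_form (n : ℕ) (hn : 2 ≤ n) (k : ℤ) (hk : k ≠ 0)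
    (φ : MulAut (FreeGroup (Fin n)))
    (hφ1 : φ (FreeGroup.of (⟨0, by omega⟩ : Fin n)) =
      FreeGroup.of (⟨0, by omega⟩ : Fin n) ^ k * FreeGroup.of (⟨1, by omega⟩ : Fin n) *
        FreeGroup.of (⟨0, by omega⟩ : Fin n) ^ (-k))
    (hφ2 : φ (FreeGroup.of (⟨1, by omega⟩ : Fin n)) = FreeGroup.of (⟨0, by omega⟩ : Fin n))
    (hφ3 : ∀ j : Fin n, j ≠ ⟨0, by omega⟩ → j ≠ ⟨1, by omega⟩ →
      φ (FreeGroup.of j) = FreeGroup.of j)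
    (w u : FreeGroup (Fin n)) (hu : u ≠ 1)
    (huhead : ∀ p ∈ u.toWord.head?, p.1 ≠ (⟨0, by omega⟩ : Fin n))
    (hulast : ∀ p ∈ u.toWord.getLast?, p.1 ≠ (⟨0, by omega⟩ : Fin n))
    (hw : w = FreeGroup.of (⟨0, by omega⟩ : Fin n) ^ k * u *
      FreeGroup.of (⟨0, by omega⟩ : Fin n) ^ (-k)) :
    ∃ u' : FreeGroup (Fin n), u' ≠ 1 ∧
      (∀ p ∈ u'.toWord.head?, p.1 ≠ (⟨0, by omega⟩ : Fin n)) ∧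
      (∀ p ∈ u'.toWord.getLast?, p.1 ≠ (⟨0, by omega⟩ : Fin n)) ∧
      φ w = FreeGroup.of (⟨0, by omega⟩ : Fin n) ^ k * u' *
        FreeGroup.of (⟨0, by omega⟩ : Fin n) ^ (-k) := by
  have h0 : 0 < n := by omega
  have h1 : 1 < n := by omega
  set a : Fin n := ⟨0, by omega⟩ with ha
  set b : Fin n := ⟨1, by omega⟩ with hb
  have hab : a ≠ b := by
    intro h
    rw [Fin.ext_iff] at h
    simp [ha, hb] at h
  obtain ⟨hhd, hlst⟩ := Wada3.conj_spec a b hab k hk u hu huhead hulast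
  have hpsi_eq : Wada2.psi a b k =
      ((MulAut.conj ((of a : FreeGroup (Fin n)) ^ (-k))).toMonoidHom.comp
        (φ : FreeGroup (Fin n) →* FreeGroup (Fin n))) := by
    apply FreeGroup.ext_hom
    intro i
    simp only [MonoidHom.comp_apply, MulEquiv.coe_toMonoidHom, MulAut.conj_apply,
      MonoidHom.coe_coe]
    by_cases hia : i = a
    · rw [hia, Wada2.psi_of_a, hφ1]
      group
    · by_cases hib : i = b
      · rw [hib, Wada2.psi_of_b hab, hφ2]
        group
      · rw [Wada2.psi_of_other hia hib, hφ3 i hia hib]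
        group
  have hpsi_u : Wada2.psi a b k u = of a ^ (-k) * φ u * of a ^ k := by
    rw [hpsi_eq]
    simp only [MonoidHom.comp_apply, MulEquiv.coe_toMonoidHom, MulAut.conj_apply,
      MonoidHom.coe_coe]
    group
  refine ⟨of b ^ k * Wada2.psi a b k u * of b ^ (-k), ?_, ?_, ?_, ?_⟩
  · intro h
    rw [h] at hhd
    simp [FreeGroup.toWord_one] at hhd
  · intro p hp
    have hps : some p = some (b, decide (0 < k)) := (Option.mem_def.1 hp).symm.trans hhd
    rw [Option.some.injEq] at hps
    rw [hps]
    exact Ne.symm hab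
  · intro p hp
    have hps : some p = some (b, decide (0 < -k)) := (Option.mem_def.1 hp).symm.trans hlst
    rw [Option.some.injEq] at hps
    rw [hps]
    exact Ne.symm hab
  · rw [hw]
    have hsplit : φ (of a ^ k * u * of a ^ (-k)) =
        (φ (of a)) ^ k * φ u * (φ (of a)) ^ (-k) := by
      simp [map_mul, map_zpow]
    have c1 : ((of a : FreeGroup (Fin n)) ^ k * of b * of a ^ (-k)) ^ k =
        of a ^ k * of b ^ k * of a ^ (-k) := by
      rw [zpow_neg, conj_zpow, ← zpow_neg]
    have c2 : ((of a : FreeGroup (Fin n)) ^ k * of b * of a ^ (-k)) ^ (-k) =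
        of a ^ k * of b ^ (-k) * of a ^ (-k) := by
      rw [zpow_neg (of a : FreeGroup (Fin n)) k, conj_zpow, ← zpow_neg]
    rw [hsplit, hφ1, hpsi_u, c1, c2]
    group
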